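/- Let W̃₁, W̃₂ be spherical Wulff shapes relative to the same point N ∈ Sⁿ⁺¹, with spherical duals DW̃ᵢ = W̃ᵢ°. Then (DW̃₁ ∩ DW̃₂)° = s-conv(W̃₁ ∪ W̃₂). -/

import Mathlib

open RealInnerProductSpace

/-- The unit sphere `Sⁿ⁺¹` in `ℝⁿ⁺²`. -/
def sph (n : ℕ) : Set (EuclideanSpace ℝ (Fin (n + 2))) :=
  Metric.sphere (0 : EuclideanSpace ℝ (Fin (n + 2))) 1

/-- The closed hemisphere centered at `P`. -/
def hemi (n : ℕ) (P : EuclideanSpace ℝ (Fin (n + 2))) :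
    Set (EuclideanSpace ℝ (Fin (n + 2))) :=
  {Q ∈ sph n | 0 ≤ ⟪P, Q⟫}

/-- The spherical polar set `W° = ⋂_{P ∈ W} H(P)`. -/
def spolar (n : ℕ) (W : Set (EuclideanSpace ℝ (Fin (n + 2)))) :
    Set (EuclideanSpace ℝ (Fin (n + 2))) :=
  {Q ∈ sph n | ∀ P ∈ W, 0 ≤ ⟪P, Q⟫}

/-- `W` is hemispherical: disjoint from some closed hemisphere. -/
def Hemispherical (n : ℕ) (W : Set (EuclideanSpace ℝ (Fin (n + 2)))) : Prop :=
  ∃ Q ∈ sph n, W ∩ hemi n Q = ∅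

/-- The spherical convex hull: normalized nonnegative convex combinations of points of `W`. -/
def sconv (n : ℕ) (W : Set (EuclideanSpace ℝ (Fin (n + 2)))) :
    Set (EuclideanSpace ℝ (Fin (n + 2))) :=
  {x | ∃ (k : ℕ) (t : Fin k → ℝ) (P : Fin k → EuclideanSpace ℝ (Fin (n + 2))),
    (∀ i, P i ∈ W) ∧ (∀ i, 0 ≤ t i) ∧ (∑ i, t i) = 1 ∧
    x = ‖∑ i, t i • P i‖⁻¹ • ∑ i, t i • P i}

/-- A set is spherical convex if it contains the geodesic arc between any two of its points. -/
def SphericalConvex (n : ℕ) (C : Set (EuclideanSpace ℝ (Fin (n + 2)))) : Prop :=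
  ∀ P ∈ C, ∀ Q ∈ C, ∀ t ∈ Set.Icc (0 : ℝ) 1,
    ‖(1 - t) • P + t • Q‖⁻¹ • ((1 - t) • P + t • Q) ∈ C

/-- A spherical Wulff shape relative to `N`: a closed spherical convex body disjoint from
`H(-N)` and having `N` as an interior point (in the sphere). -/
def IsSphericalWulffShape (n : ℕ) (N : EuclideanSpace ℝ (Fin (n + 2)))
    (W : Set (EuclideanSpace ℝ (Fin (n + 2)))) : Prop :=
  W ⊆ sph n ∧ IsClosed W ∧ SphericalConvex n W ∧
    W ∩ hemi n (-N) = ∅ ∧ ∃ ε > (0 : ℝ), sph n ∩ Metric.ball N ε ⊆ W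

private lemma myIsCompact_convexHull {m : ℕ} {s : Set (EuclideanSpace ℝ (Fin m))}
    (hs : IsCompact s) : IsCompact (convexHull ℝ s) := by
  rcases s.eq_empty_or_nonempty with rfl | ⟨s₀, hs₀⟩
  · simp
  set d := m + 1 with hd
  set A : Set ((Fin d → ℝ) × (Fin d → EuclideanSpace ℝ (Fin m))) :=
    (stdSimplex ℝ (Fin d)) ×ˢ (Set.univ.pi fun _ => s) with hA
  have hAcomp : IsCompact A :=
    (isCompact_stdSimplex (𝕜 := ℝ) (ι := Fin d)).prod (isCompact_univ_pi fun _ => hs)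
  have hfc : Continuous (fun p : (Fin d → ℝ) × (Fin d → EuclideanSpace ℝ (Fin m)) =>
      ∑ i, p.1 i • p.2 i) := by
    apply continuous_finset_sum
    intro i _
    exact ((continuous_apply i).comp continuous_fst).smul
      ((continuous_apply i).comp continuous_snd)
  have key : convexHull ℝ s = (fun p : (Fin d → ℝ) × (Fin d → EuclideanSpace ℝ (Fin m)) =>
      ∑ i, p.1 i • p.2 i) '' A := by
    apply Set.Subset.antisymm
    · intro x hx
      obtain ⟨ι, hι, z, w, hrange, hindep, hpos, hsum1, hsumx⟩ :=
        eq_pos_convex_span_of_mem_convexHull hx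
      have hcard : Fintype.card ι ≤ d := by
        have h1 := hindep.card_le_finrank_succ
        have h2 : Module.finrank ℝ ↥(vectorSpan ℝ (Set.range z)) ≤
            Module.finrank ℝ (EuclideanSpace ℝ (Fin m)) := Submodule.finrank_le _
        have h3 : Module.finrank ℝ (EuclideanSpace ℝ (Fin m)) = m := by
          simp [finrank_euclideanSpace]
        omega
      set k := Fintype.card ι with hk
      have e : ι ≃ Fin k := Fintype.equivFin ι
      set W : ℕ → ℝ := fun j => if h : j < k then w (e.symm ⟨j, h⟩) else 0 with hW
      set Z : ℕ → EuclideanSpace ℝ (Fin m) :=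
        fun j => if h : j < k then z (e.symm ⟨j, h⟩) else s₀ with hZ
      have hWzero : ∀ j ∈ Finset.range d, j ∉ Finset.range k → W j = 0 := by
        intro j _ hj
        rw [Finset.mem_range] at hj
        exact dif_neg hj
      refine ⟨(fun j : Fin d => W j, fun j : Fin d => Z j), ⟨⟨?_, ?_⟩, ?_⟩, ?_⟩
      · intro j
        simp only [hW]
        split
        · exact (hpos _).le
        · exact le_refl 0
      · rw [Fin.sum_univ_eq_sum_range W d,
          ← Finset.sum_subset (Finset.range_subset_range.2 hcard) hWzero,
          ← Fin.sum_univ_eq_sum_range W k, ← hsum1, ← Equiv.sum_comp e.symm w]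
        apply Finset.sum_congr rfl
        intro j _
        exact dif_pos j.isLt
      · intro j _
        simp only [hZ]
        split
        · exact hrange (Set.mem_range_self _)
        · exact hs₀
      · show (∑ j : Fin d, W j • Z j) = x
        have hWZzero : ∀ j ∈ Finset.range d, j ∉ Finset.range k → W j • Z j = 0 := by
          intro j hj hj'
          rw [hWzero j hj hj', zero_smul]
        rw [Fin.sum_univ_eq_sum_range (fun j => W j • Z j) d,
          ← Finset.sum_subset (Finset.range_subset_range.2 hcard) hWZzero,
          ← Fin.sum_univ_eq_sum_range (fun j => W j • Z j) k,
          ← hsumx, ← Equiv.sum_comp e.symm (fun i => w i • z i)]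
        apply Finset.sum_congr rfl
        intro j _
        show W j • Z j = _
        rw [hW, hZ]
        simp only [dif_pos j.isLt]
    · rintro x ⟨⟨wv, zv⟩, ⟨⟨hw0, hw1⟩, hz⟩, rfl⟩
      exact mem_convexHull_of_exists_fintype wv zv hw0 hw1
        (fun i => hz i (Set.mem_univ i)) rfl
  rw [key]
  exact hAcomp.image hfc

private lemma myCone_isClosed {m : ℕ} {C : Set (EuclideanSpace ℝ (Fin m))}
    (hC : IsCompact C) (h0 : (0 : EuclideanSpace ℝ (Fin m)) ∉ C) :
    IsClosed {x | ∃ c : ℝ, 0 ≤ c ∧ ∃ y ∈ C, x = c • y} := by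
  apply IsSeqClosed.isClosed
  intro u z hu huz
  choose c hc y hy hcy using hu
  obtain ⟨ybar, hybar, φ, hφ, hyφ⟩ := hC.tendsto_subseq hy
  have hynorm : ∀ k, ‖y k‖ ≠ 0 := by
    intro k h
    have := hy k
    rw [norm_eq_zero.mp h] at this
    exact h0 this
  have hybarnorm : ‖ybar‖ ≠ 0 := by
    intro h
    exact h0 (norm_eq_zero.mp h ▸ hybar)
  have hceq : ∀ k, c k = ‖u k‖ / ‖y k‖ := by
    intro k
    rw [hcy k, norm_smul, Real.norm_eq_abs, abs_of_nonneg (hc k),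
      mul_div_assoc, div_self (hynorm k), mul_one]
  have hctend : Filter.Tendsto (fun k => c (φ k)) Filter.atTop (nhds (‖z‖ / ‖ybar‖)) := by
    simp only [hceq]
    exact ((huz.comp hφ.tendsto_atTop).norm).div (hyφ.norm) hybarnorm
  have hlim : Filter.Tendsto (fun k => c (φ k) • y (φ k)) Filter.atTop
      (nhds ((‖z‖ / ‖ybar‖) • ybar)) := hctend.smul hyφ
  have hlim2 : Filter.Tendsto (fun k => c (φ k) • y (φ k)) Filter.atTop (nhds z) := by
    have heq : (fun k => c (φ k) • y (φ k)) = u ∘ φ := by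
      funext k; exact (hcy (φ k)).symm
    rw [heq]
    exact huz.comp hφ.tendsto_atTop
  exact ⟨‖z‖ / ‖ybar‖, div_nonneg (norm_nonneg _) (norm_nonneg _), ybar, hybar,
    tendsto_nhds_unique hlim2 hlim⟩

private lemma myCone_convex {m : ℕ} {C : Set (EuclideanSpace ℝ (Fin m))}
    (hC : Convex ℝ C) :
    Convex ℝ {x | ∃ c : ℝ, 0 ≤ c ∧ ∃ y ∈ C, x = c • y} := by
  rintro x₁ ⟨c₁, hc₁, y₁, hy₁, rfl⟩ x₂ ⟨c₂, hc₂, y₂, hy₂, rfl⟩ a b ha hb hab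
  rcases eq_or_lt_of_le (add_nonneg (mul_nonneg ha hc₁) (mul_nonneg hb hc₂)) with h | h
  · have h1 : a * c₁ = 0 ∧ b * c₂ = 0 := by
      constructor <;> nlinarith [mul_nonneg ha hc₁, mul_nonneg hb hc₂]
    refine ⟨0, le_refl 0, y₁, hy₁, ?_⟩
    rw [smul_smul, smul_smul, h1.1, h1.2]
    simp
  · set t := a * c₁ + b * c₂ with ht
    refine ⟨t, h.le, (a * c₁ / t) • y₁ + (b * c₂ / t) • y₂, ?_, ?_⟩
    · exact hC hy₁ hy₂ (div_nonneg (mul_nonneg ha hc₁) h.le)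
        (div_nonneg (mul_nonneg hb hc₂) h.le) (by field_simp; linarith)
    · rw [smul_add, smul_smul, smul_smul, smul_smul, smul_smul]
      congr 1 <;> rw [mul_div_cancel₀ _ h.ne']

theorem spolar_inter_duals (n : ℕ) (N : EuclideanSpace ℝ (Fin (n + 2))) (hN : N ∈ sph n)
    (W₁ W₂ : Set (EuclideanSpace ℝ (Fin (n + 2))))
    (h₁ : IsSphericalWulffShape n N W₁) (h₂ : IsSphericalWulffShape n N W₂) :
    spolar n (spolar n W₁ ∩ spolar n W₂) = sconv n (W₁ ∪ W₂) := by
  set S := W₁ ∪ W₂ with hS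
  have hSsub : S ⊆ sph n := Set.union_subset h₁.1 h₂.1
  have hSpos : ∀ P ∈ S, 0 < ⟪N, P⟫ := by
    intro P hP
    by_contra hle
    push_neg at hle
    have hmem : P ∈ hemi n (-N) := by
      refine ⟨hSsub hP, ?_⟩
      rw [inner_neg_left]
      linarith
    rcases hP with hP | hP
    · exact absurd (Set.mem_inter hP hmem) (by rw [h₁.2.2.2.1]; exact Set.notMem_empty P)
    · exact absurd (Set.mem_inter hP hmem) (by rw [h₂.2.2.2.1]; exact Set.notMem_empty P)
  have hNW₁ : N ∈ W₁ := by
    obtain ⟨ε, hε, hball⟩ := h₁.2.2.2.2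
    exact hball ⟨hN, Metric.mem_ball_self hε⟩
  apply Set.Subset.antisymm
  · -- hard direction
    rintro Q ⟨hQs, hQp⟩
    set C := convexHull ℝ S with hC
    set K := {x : EuclideanSpace ℝ (Fin (n + 2)) | ∃ c : ℝ, 0 ≤ c ∧ ∃ y ∈ C, x = c • y} with hK
    have hScomp : IsCompact S :=
      IsCompact.of_isClosed_subset (isCompact_sphere 0 1) (h₁.2.1.union h₂.2.1) hSsub
    have hCcomp : IsCompact C := myIsCompact_convexHull hScomp
    have hlin : IsLinearMap ℝ (fun x : EuclideanSpace ℝ (Fin (n + 2)) => ⟪N, x⟫) :=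
      ⟨fun a b => inner_add_right N a b, fun c a => real_inner_smul_right N a c⟩
    have hCpos : ∀ x ∈ C, 0 < ⟪N, x⟫ := fun x hx =>
      convexHull_min hSpos (convex_halfSpace_gt hlin (0 : ℝ)) hx
    have h0C : (0 : EuclideanSpace ℝ (Fin (n + 2))) ∉ C := by
      intro h
      have := hCpos 0 h
      rw [inner_zero_right] at this
      exact lt_irrefl _ this
    have hNC : N ∈ C := subset_convexHull ℝ S (Or.inl hNW₁)
    have hQK : Q ∈ K := by
      by_contra hQK
      obtain ⟨f, u, hfK, hfQ⟩ :=
        geometric_hahn_banach_closed_point (myCone_convex (convex_convexHull ℝ S))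
          (myCone_isClosed hCcomp h0C) hQK
      have h0K : (0 : EuclideanSpace ℝ (Fin (n + 2))) ∈ K :=
        ⟨0, le_refl 0, N, hNC, (zero_smul ℝ N).symm⟩
      have hu : 0 < u := by
        have := hfK 0 h0K
        rwa [map_zero] at this
      have hfC : ∀ P ∈ C, f P ≤ 0 := by
        intro P hP
        by_contra hpos
        push_neg at hpos
        have hcK : ((u + 1) / f P) • P ∈ K :=
          ⟨(u + 1) / f P, div_nonneg (by linarith) hpos.le, P, hP, rfl⟩
        have := hfK _ hcK
        rw [map_smul, smul_eq_mul, div_mul_cancel₀ _ hpos.ne'] at this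
        linarith
      set v := (InnerProductSpace.toDual ℝ (EuclideanSpace ℝ (Fin (n + 2)))).symm f with hv
      have hvx : ∀ x, ⟪v, x⟫ = f x := fun x => InnerProductSpace.toDual_symm_apply
      have hvQ : 0 < ⟪v, Q⟫ := by rw [hvx]; linarith
      have hvne : v ≠ 0 := by
        intro h
        rw [h, inner_zero_left] at hvQ
        exact lt_irrefl _ hvQ
      have hvnorm : (0 : ℝ) < ‖v‖ := norm_pos_iff.mpr hvne
      set P₀ := ‖v‖⁻¹ • (-v) with hP₀
      have hP₀sph : P₀ ∈ sph n := by
        show P₀ ∈ Metric.sphere _ _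
        rw [mem_sphere_zero_iff_norm, hP₀, norm_smul, norm_neg, Real.norm_eq_abs,
          abs_of_nonneg (inv_nonneg.2 hvnorm.le), inv_mul_cancel₀ hvnorm.ne']
      have hP₀i : ∀ (W : Set (EuclideanSpace ℝ (Fin (n + 2)))), W ⊆ S → P₀ ∈ spolar n W := by
        intro W hW
        refine ⟨hP₀sph, fun R hR => ?_⟩
        have hRC : R ∈ C := subset_convexHull ℝ S (hW hR)
        have hfR : f R ≤ 0 := hfC R hRC
        rw [hP₀, real_inner_smul_right, inner_neg_right, real_inner_comm, hvx]
        exact mul_nonneg (inv_nonneg.2 hvnorm.le) (by linarith)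
      have hcontr := hQp P₀ ⟨hP₀i W₁ Set.subset_union_left, hP₀i W₂ Set.subset_union_right⟩
      rw [hP₀, real_inner_smul_left, inner_neg_left] at hcontr
      have hinv : 0 < ‖v‖⁻¹ := inv_pos.2 hvnorm
      nlinarith
    obtain ⟨c, hc, y, hyC, hQcy⟩ := hQK
    obtain ⟨ι, hι, w, zf, hw0, hw1, hzS, hsum⟩ := mem_convexHull_iff_exists_fintype.1 hyC
    set e := Fintype.equivFin ι with he
    refine ⟨Fintype.card ι, fun i => w (e.symm i), fun i => zf (e.symm i),
      fun i => hzS _, fun i => hw0 _, ?_, ?_⟩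
    · rw [Equiv.sum_comp e.symm w, hw1]
    · have hsum' : (∑ i, w (e.symm i) • zf (e.symm i)) = y := by
        rw [Equiv.sum_comp e.symm (fun i => w i • zf i), hsum]
      rw [hsum']
      have hy0 : y ≠ 0 := fun h => h0C (h ▸ hyC)
      have hQn : ‖Q‖ = 1 := mem_sphere_zero_iff_norm.mp hQs
      have h1 : c * ‖y‖ = 1 := by
        rw [hQcy, norm_smul, Real.norm_eq_abs, abs_of_nonneg hc] at hQn
        exact hQn
      have hceq : c = ‖y‖⁻¹ := eq_inv_of_mul_eq_one_left h1
      rw [hQcy, hceq]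
  · -- easy direction
    rintro x ⟨k, t, P, hPS, ht, hsum1, hx⟩
    set s := ∑ i, t i • P i with hs
    have hNs : 0 < ⟪N, s⟫ := by
      rw [hs, inner_sum]
      simp only [real_inner_smul_right]
      obtain ⟨i, _, hti⟩ := Finset.exists_ne_zero_of_sum_ne_zero
        (by rw [hsum1]; exact one_ne_zero : (∑ i, t i) ≠ 0)
      refine Finset.sum_pos' (fun j _ => mul_nonneg (ht j) (hSpos _ (hPS j)).le)
        ⟨i, Finset.mem_univ i, ?_⟩
      exact mul_pos ((ht i).lt_of_ne (Ne.symm hti)) (hSpos _ (hPS i))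
    have hs0 : s ≠ 0 := by
      intro h
      rw [h, inner_zero_right] at hNs
      exact lt_irrefl _ hNs
    have hsn : ‖s‖ ≠ 0 := norm_ne_zero_iff.2 hs0
    constructor
    · show x ∈ Metric.sphere _ _
      rw [mem_sphere_zero_iff_norm, hx, norm_smul, Real.norm_eq_abs,
        abs_of_nonneg (inv_nonneg.2 (norm_nonneg _)), inv_mul_cancel₀ hsn]
    · rintro P' ⟨hP'1, hP'2⟩
      rw [hx, real_inner_smul_right]
      refine mul_nonneg (inv_nonneg.2 (norm_nonneg _)) ?_
      rw [inner_sum]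
      refine Finset.sum_nonneg fun i _ => ?_
      rw [real_inner_smul_right]
      refine mul_nonneg (ht i) ?_
      rw [real_inner_comm]
      rcases hPS i with h | h
      · exact hP'1.2 _ h
      · exact hP'2.2 _ h
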